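/- arXiv:1403.5573 — 3 statements merged into one kernel-verified Lean document; each statement's English description precedes it below -/
import Mathlib

section
/- The characteristic polynomial of the 19×19 matrix A (ternary search tree urn matrix, entries as listed) is (λ-1)·λ·(λ+2)·(λ+3)²·(λ+4)⁴·(λ+5)³·(λ+6)³·(λ+7)²·(λ+8)·(λ+9), up to sign. -/
open Polynomial

/-- The 19×19 replacement matrix of the Pólya urn for protected nodes in ternary
search trees. -/
def Atern : Matrix (Fin 19) (Fin 19) ℚ :=
  !![-9, 2, 0, 0, 0, 0, 0, 0, 0, 0, 0, 0, 0, 0, 0, 0, 0, 0, 0;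
     0, -8, 4, 1, 0, 0, 0, 0, 0, 0, 0, 0, 0, 0, 0, 0, 0, 0, 0;
     0, 0, -7, 0, 6, 0, 1, 0, 0, 0, 0, 0, 0, 0, 0, 0, 0, 0, 0;
     0, 0, 0, -7, 0, 0, 2, 0, 0, 0, 0, 0, 0, 0, 0, 0, 0, 0, 0;
     0, 0, 0, 0, -6, 0, 0, 0, 1, 0, 0, 0, 0, 0, 0, 0, 0, 0, 0;
     9, 0, 0, 0, 0, -6, 0, 2, 0, 0, 0, 0, 0, 0, 0, 0, 0, 0, 0;
     0, 0, 0, 0, 0, 0, -6, 0, 4, 2, 0, 0, 0, 0, 0, 0, 0, 0, 0;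
     0, 6, 0, 0, 0, 0, 0, -5, 0, 0, 4, 1, 0, 0, 0, 0, 0, 0, 0;
     0, 0, 0, 0, 0, 0, 0, 0, -5, 0, 0, 0, 2, 0, 0, 0, 0, 0, 0;
     0, 0, 0, 0, 0, 0, 0, 0, 0, -5, 0, 0, 2, 0, 0, 0, 0, 0, 0;
     0, 0, 3, 0, 0, 0, 0, 0, 0, 0, -4, 0, 0, 0, 1, 0, 0, 0, 0;
     0, 0, 0, 6, 0, 0, 0, 0, 0, 0, 0, -4, 0, 0, 2, 0, 0, 0, 0;
     9, 6, 3, 6, 0, 6, 3, 3, 0, 3, 0, 3, -4, 3, 0, 0, 0, 0, 0;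
     0, 0, 0, 0, 0, 6, 0, 0, 0, 0, 0, 0, 0, -3, 0, 2, 0, 0, 0;
     0, 0, 0, 0, 0, 0, 3, 0, 0, 0, 0, 0, 0, 0, -3, 0, 2, 0, 0;
     0, 0, 0, 0, 0, 0, 0, 3, 0, 0, 0, 0, 0, 0, 0, -2, 0, 1, 0;
     0, 0, 0, 0, 0, 0, 0, 0, 0, 3, 0, 0, 0, 0, 0, 0, -2, 0, 0;
     0, 0, 0, 0, 0, 0, 0, 0, 0, 0, 0, 3, 0, 0, 0, 0, 0, -1, 0;
     0, 0, 0, 0, 0, 0, 0, 0, 0, 0, 0, 0, 0, 3, 0, 0, 0, 0, 0]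

set_option maxRecDepth 4000

namespace TernAux

def AZ : Matrix (Fin 19) (Fin 19) ℤ :=
  !![-9, 2, 0, 0, 0, 0, 0, 0, 0, 0, 0, 0, 0, 0, 0, 0, 0, 0, 0;
     0, -8, 4, 1, 0, 0, 0, 0, 0, 0, 0, 0, 0, 0, 0, 0, 0, 0, 0;
     0, 0, -7, 0, 6, 0, 1, 0, 0, 0, 0, 0, 0, 0, 0, 0, 0, 0, 0;
     0, 0, 0, -7, 0, 0, 2, 0, 0, 0, 0, 0, 0, 0, 0, 0, 0, 0, 0;
     0, 0, 0, 0, -6, 0, 0, 0, 1, 0, 0, 0, 0, 0, 0, 0, 0, 0, 0;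
     9, 0, 0, 0, 0, -6, 0, 2, 0, 0, 0, 0, 0, 0, 0, 0, 0, 0, 0;
     0, 0, 0, 0, 0, 0, -6, 0, 4, 2, 0, 0, 0, 0, 0, 0, 0, 0, 0;
     0, 6, 0, 0, 0, 0, 0, -5, 0, 0, 4, 1, 0, 0, 0, 0, 0, 0, 0;
     0, 0, 0, 0, 0, 0, 0, 0, -5, 0, 0, 0, 2, 0, 0, 0, 0, 0, 0;
     0, 0, 0, 0, 0, 0, 0, 0, 0, -5, 0, 0, 2, 0, 0, 0, 0, 0, 0;
     0, 0, 3, 0, 0, 0, 0, 0, 0, 0, -4, 0, 0, 0, 1, 0, 0, 0, 0;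
     0, 0, 0, 6, 0, 0, 0, 0, 0, 0, 0, -4, 0, 0, 2, 0, 0, 0, 0;
     9, 6, 3, 6, 0, 6, 3, 3, 0, 3, 0, 3, -4, 3, 0, 0, 0, 0, 0;
     0, 0, 0, 0, 0, 6, 0, 0, 0, 0, 0, 0, 0, -3, 0, 2, 0, 0, 0;
     0, 0, 0, 0, 0, 0, 3, 0, 0, 0, 0, 0, 0, 0, -3, 0, 2, 0, 0;
     0, 0, 0, 0, 0, 0, 0, 3, 0, 0, 0, 0, 0, 0, 0, -2, 0, 1, 0;
     0, 0, 0, 0, 0, 0, 0, 0, 0, 3, 0, 0, 0, 0, 0, 0, -2, 0, 0;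
     0, 0, 0, 0, 0, 0, 0, 0, 0, 0, 0, 3, 0, 0, 0, 0, 0, -1, 0;
     0, 0, 0, 0, 0, 0, 0, 0, 0, 0, 0, 0, 0, 3, 0, 0, 0, 0, 0]

def SZ : Matrix (Fin 19) (Fin 19) ℤ :=
  !![-1, -2, -1, -4, 8, 2, 0, 5, 4, 0, -2, 0, 0, 214, 9, 1, 0, 0, 1;
     0, -1, -1, -4, 12, 3, 0, 10, 8, 0, -5, 0, 0, 475, 27, 3, 0, 0, 5;
     0, 0, -1, -1, 6, -3, 0, 7, 5, 0, -4, 0, 0, 320, 27, 3, 0, 0, 9;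
     0, 0, 3, 0, 0, 18, 0, 2, 4, 0, -4, 0, 0, 320, 27, 3, 0, 0, 9;
     0, 0, 0, 0, 1, -2, 0, 2, 1, 0, -1, 0, 0, 60, 9, 1, 0, 0, 6;
     3, 7, 1, 16, -9, 0, 1, -9, -6, 2, 9, 1, 4, -1033, -25, 9, 1, 0, 7;
     0, 0, 0, 0, 0, 9, 0, 2, 4, 0, -6, 0, 0, 360, 54, 6, 0, 0, 36;
     0, 2, 4, 10, -36, -9, 0, -27, -21, 1, 18, 1, 4, -1366, -78, 9, 2, 0, 20;
     0, 0, 0, 0, 0, 0, 0, 2, 1, 0, -2, 0, 0, 60, 27, 3, 0, 0, 42;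
     0, 0, 0, 0, 0, 0, 0, -3, 0, 0, -2, 0, 0, 60, 27, 3, 0, 0, 42;
     0, 0, 1, 1, -9, 9, 0, -15, -9, 0, 12, 1, 1, -504, -53, 0, 1, 0, 15;
     0, 0, -6, 0, 0, -45, 0, 0, -12, 0, 0, -3, 0, -400, -106, 0, 2, 0, 30;
     0, 0, 0, 0, 0, 0, 0, 0, 0, 0, -1, 0, 0, -30, 27, 3, 0, 0, 126;
     -3, -8, 0, -21, 0, 0, -2, 0, 0, -5, 0, 0, -12, 840, 0, -53, -6, 0, 28;
     0, 0, 0, 0, 0, -9, 0, -6, -6, 0, 12, 0, 0, -360, -134, -9, 2, 0, 48;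
     0, -1, -3, -6, 27, 0, 0, 27, 18, -1, -27, -3, -6, 999, 75, -27, -6, 0, 35;
     0, 0, 0, 0, 0, 0, 0, 3, 0, 0, 3, 0, 0, 0, -81, -9, 1, 0, 42;
     0, 0, 3, 0, 0, 27, 0, 0, 9, 0, 0, 3, 0, 0, 159, 0, -6, 0, 45;
     1, 3, 0, 9, 0, 0, 1, 0, 0, 3, 0, 0, 9, 0, 0, 53, 9, 1, 84]

def SIZ : Matrix (Fin 19) (Fin 19) ℤ :=
  !![-1455804, 26712, -1495872, -1095192, 2991744, -747936, 387324, -267120, -1135260, -734580, 213696, -387324, 747936, -373968, 93492, 106848, -26712, -13356, 0;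
     3505950, 1613850, 1725150, 2726850, -5175450, 2337300, -166950, 779100, 1947750, 1947750, -779100, 1224300, -1947750, 1168650, -333900, -389550, 111300, 55650, 0;
     1252125, 667800, 83475, 973875, -500850, 834750, 55650, 250425, 139125, 695625, -333900, 445200, -556500, 417375, -139125, -166950, 55650, 27825, 0;
     -5008500, -2671200, -667800, -3561600, 4006800, -3339000, -556500, -1001700, -890400, -2448600, 1335600, -1780800, 2226000, -1669500, 556500, 667800, -222600, -111300, 0;
     -3339000, -1669500, 0, -2337300, 2003400, -2226000, -593600, -556500, 371000, -1484000, 1113000, -1224300, 1113000, -1113000, 445200, 556500, -222600, -111300, 0;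
     -954000, -477000, 0, -667800, 477000, -636000, -153700, -159000, 137800, -455800, 318000, -349800, 318000, -318000, 127200, 159000, -63600, -31800, 0;
     121205700, 59100300, 0, 85144500, -65110500, 80469900, 20034000, 19366200, -15025500, 55093500, -38732400, 44408700, -40068000, 40068000, -16695000, -20034000, 8347500, 4006800, 0;
     -2003400, -890400, 222600, -1446900, 1335600, -1335600, -333900, -222600, 779100, -1001700, 890400, -779100, 445200, -667800, 333900, 445200, -222600, -111300, 0;
     10017000, 4452000, -1113000, 7234500, -6678000, 6678000, 1669500, 1113000, -3561600, 4674600, -4452000, 3895500, -2226000, 3339000, -1669500, -2226000, 1113000, 556500, 0;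
     -84142800, -36729000, 8681400, -61437600, 52088400, -56095200, -13022100, -9015300, 30384900, -39734100, 36061200, -33056100, 18698400, -28047600, 15025500, 18698400, -10017000, -4674600, 0;
     480816, 761292, 1041768, 40068, 1322244, 320544, 320544, 601020, 601020, -400680, 881496, -120204, -454104, 160272, 160272, 440748, -560952, -280476, 0;
     -15225840, -9082080, -2938320, -9838920, 3205440, -10150560, -3361260, -4006800, 3116400, -4452000, 2136960, -4652340, 4362960, -5075280, 1825320, 1068480, 845880, 534240, 0;
     14023800, 7479360, 1268820, 9571800, -4607820, 9349200, 2359560, 2804760, -4518780, 5453700, -3405780, 4785900, -3428040, 4674600, -2426340, -1869840, 556500, 0, 0;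
     -60102, -20034, 20034, -46746, 60102, -40068, -6678, 0, 33390, -33390, 40068, -26712, 6678, -20034, 13356, 20034, -13356, -6678, 0;
     -141750, 0, 141750, -141750, 283500, -94500, -6300, 47250, 129150, -129150, 189000, -94500, 0, -47250, 40950, 94500, -81900, -47250, 0;
     774900, 0, -774900, 774900, -1549800, 516600, 56700, -258300, -661500, 661500, -1033200, 516600, 0, 258300, -201600, -516600, 403200, 258300, 0;
     0, 333900, 667800, -333900, 1001700, 0, 0, 333900, 333900, -333900, 667800, -333900, 0, 0, 0, 333900, -333900, -333900, 0;
     -166950, -166950, -166950, -166950, -166950, 0, -166950, 0, -166950, -166950, 0, 0, -166950, 166950, 0, 166950, 0, 166950, 333900;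
     1431, 1272, 1113, 1113, 954, 954, 954, 795, 795, 795, 636, 636, 636, 477, 477, 318, 318, 159, 0]

def TZ : Matrix (Fin 19) (Fin 19) ℤ :=
  !![-9, 0, 0, 0, 0, 0, 0, 0, 0, 0, 0, 0, 0, 0, 0, 0, 0, 0, 0;
     0, -8, 0, 0, 0, 0, 0, 0, 0, 0, 0, 0, 0, 0, 0, 0, 0, 0, 0;
     0, 0, -7, 0, 0, 0, 0, 0, 0, 0, 0, 0, 0, 0, 0, 0, 0, 0, 0;
     0, 0, 0, -7, 0, 0, 0, 0, 0, 0, 0, 0, 0, 0, 0, 0, 0, 0, 0;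
     0, 0, 0, 0, -6, 0, 0, 0, 0, 0, 0, 0, 0, 0, 0, 0, 0, 0, 0;
     0, 0, 0, 0, 0, -6, 0, 0, 0, 0, 0, 0, 0, 0, 0, 0, 0, 0, 0;
     0, 0, 0, 0, 0, 0, -6, 0, 0, 0, 0, 0, 0, 0, 0, 0, 0, 0, 0;
     0, 0, 0, 0, 0, 0, 0, -5, 0, 0, 0, 0, 0, 0, 0, 0, 0, 0, 0;
     0, 0, 0, 0, 0, 0, 0, 0, -5, 0, 0, 0, 0, 0, 0, 0, 0, 0, 0;
     0, 0, 0, 0, 0, 0, 0, 0, 0, -5, 0, 0, 0, 0, 0, 0, 0, 0, 0;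
     0, 0, 0, 0, 0, 0, 0, 0, 0, 0, -4, 0, 0, 60, 0, 0, 0, 0, 0;
     0, 0, 0, 0, 0, 0, 0, 0, 0, 0, 0, -4, 0, -400, 0, 0, 0, 0, 0;
     0, 0, 0, 0, 0, 0, 0, 0, 0, 0, 0, 0, -4, 280, 0, 0, 0, 0, 0;
     0, 0, 0, 0, 0, 0, 0, 0, 0, 0, 0, 0, 0, -4, 0, 0, 0, 0, 0;
     0, 0, 0, 0, 0, 0, 0, 0, 0, 0, 0, 0, 0, 0, -3, 0, 0, 0, 0;
     0, 0, 0, 0, 0, 0, 0, 0, 0, 0, 0, 0, 0, 0, 0, -3, 0, 0, 0;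
     0, 0, 0, 0, 0, 0, 0, 0, 0, 0, 0, 0, 0, 0, 0, 0, -2, 0, 0;
     0, 0, 0, 0, 0, 0, 0, 0, 0, 0, 0, 0, 0, 0, 0, 0, 0, 0, 0;
     0, 0, 0, 0, 0, 0, 0, 0, 0, 0, 0, 0, 0, 0, 0, 0, 0, 0, 1]



lemma charpoly_similar {n : ℕ} (A S S' T : Matrix (Fin n) (Fin n) ℤ) (d : ℤ) (hd : d ≠ 0)
    (h : A * S = S * T) (h2 : S * S' = d • 1) : A.charpoly = T.charpoly := by
  have h3 : S.det * S'.det = d ^ (Fintype.card (Fin n)) := by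
    rw [← Matrix.det_mul, h2, Matrix.det_smul, Matrix.det_one, mul_one]
  have hdet : S.det ≠ 0 := by
    intro h0
    rw [h0, zero_mul] at h3
    exact pow_ne_zero _ hd h3.symm
  have key : A.charmatrix * S.map (C : ℤ →+* ℤ[X]) = S.map (C : ℤ →+* ℤ[X]) * T.charmatrix := by
    unfold Matrix.charmatrix
    rw [sub_mul, mul_sub, RingHom.mapMatrix_apply,
      RingHom.mapMatrix_apply, ← Matrix.map_mul, h, Matrix.map_mul]
    congr 1
    exact (Matrix.scalar_commute (X : ℤ[X]) (fun r => Commute.all _ r) (S.map C)).eq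
  have e := congrArg Matrix.det key
  rw [Matrix.det_mul, Matrix.det_mul] at e
  have hC : (S.map (C : ℤ →+* ℤ[X])).det ≠ 0 := by
    rw [← RingHom.mapMatrix_apply, ← RingHom.map_det]
    simpa using hdet
  unfold Matrix.charpoly
  rw [mul_comm (S.map (C : ℤ →+* ℤ[X])).det] at e
  exact mul_right_cancel₀ hC e


set_option maxHeartbeats 4000000 in
lemma hAS : AZ * SZ = SZ * TZ := by decide

set_option maxHeartbeats 4000000 in
lemma hSSi : SZ * SIZ = (333900 : ℤ) • 1 := by decide

set_option maxHeartbeats 4000000 in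
lemma hT : TZ.BlockTriangular id := by
  have h : ∀ i j : Fin 19, j < i → TZ i j = 0 := by
    exact @of_decide_eq_true _ (@Nat.decidableForallFin 19 (fun i => ∀ j : Fin 19, j < i → TZ i j = 0)
      (fun _ => inferInstance)) (by decide)
  intro i j hij
  exact h i j hij

set_option maxHeartbeats 4000000 in
lemma charpolyTZ : TZ.charpoly =
    (X - 1) * X * (X + 2) * (X + 3) ^ 2 * (X + 4) ^ 4 * (X + 5) ^ 3 *
      (X + 6) ^ 3 * (X + 7) ^ 2 * (X + 8) * (X + 9) := by
  rw [Matrix.charpoly_of_upperTriangular _ hT]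
  simp only [TZ, Fin.prod_univ_succ, Fin.isValue, Matrix.cons_val', Matrix.cons_val_zero,
    Matrix.cons_val_one, Matrix.head_cons, Matrix.head_fin_const, Matrix.cons_val_fin_one,
    Matrix.empty_val', Matrix.of_apply, Fin.prod_univ_zero, map_neg, map_ofNat, map_zero, map_one,
    Matrix.cons_val_succ]
  ring

lemma charpolyAZ : AZ.charpoly =
    (X - 1) * X * (X + 2) * (X + 3) ^ 2 * (X + 4) ^ 4 * (X + 5) ^ 3 *
      (X + 6) ^ 3 * (X + 7) ^ 2 * (X + 8) * (X + 9) := by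
  rw [charpoly_similar AZ SZ SIZ TZ 333900 (by norm_num) hAS hSSi, charpolyTZ]

end TernAux

set_option maxHeartbeats 1000000

/-- The characteristic polynomial of `Atern` is
`(λ-1)·λ·(λ+2)·(λ+3)²·(λ+4)⁴·(λ+5)³·(λ+6)³·(λ+7)²·(λ+8)·(λ+9)`
(both sides are monic, so "up to sign" is an exact equality). -/
theorem charpoly_Atern :
    Atern.charpoly =
      (X - 1) * X * (X + 2) * (X + 3) ^ 2 * (X + 4) ^ 4 * (X + 5) ^ 3 *
        (X + 6) ^ 3 * (X + 7) ^ 2 * (X + 8) * (X + 9) := by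
  have hcast : Atern = TernAux.AZ.map ⇑(Int.castRingHom ℚ) := by
    ext i j
    fin_cases i <;> fin_cases j <;> rfl
  rw [hcast, Matrix.charpoly_map, TernAux.charpolyAZ]
  simp only [Polynomial.map_mul, Polynomial.map_pow, Polynomial.map_add, Polynomial.map_sub,
    Polynomial.map_X, Polynomial.map_one, Polynomial.map_ofNat]
end

section
/- For m ≥ 2, the characteristic polynomial of the (m-1)×(m-1) matrix A_W with entries A_W[i,i] = -i for 1 ≤ i ≤ m-1, A_W[i,i-1] = i for 2 ≤ i ≤ m-1, A_W[1,m-1] = m (replacing the diagonal entry when m-1 = 1 combines appropriately), and all other entries 0, equals φ_m(λ) = ∏_{i=1}^{m-1}(λ + i) - m!. -/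
open Polynomial

/-- The replacement matrix `A_W` for the classical `m`-ary search tree urn:
`A_W[i,i] = -i` (1-indexed), `A_W[i,i-1] = i`, `A_W[1,m-1] = m`
(entries are added, so that when `m = 2` the single entry is `-1 + 2 = 1`). -/
def AW (m : ℕ) : Matrix (Fin (m - 1)) (Fin (m - 1)) ℚ :=
  Matrix.of fun i j =>
    (if i = j then -((i : ℚ) + 1) else 0) +
    (if (i : ℕ) = (j : ℕ) + 1 then (i : ℚ) + 1 else 0) +
    (if (i : ℕ) = 0 ∧ (j : ℕ) = m - 2 then (m : ℚ) else 0)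

open Matrix Finset

lemma fact_aux (n : ℕ) : ∏ i ∈ Finset.range n, (i + 2) = (n+1).factorial := by
  induction n with
  | zero => simp
  | succ n ih =>
    rw [Finset.prod_range_succ, ih]
    conv_rhs => rw [Nat.factorial_succ]
    ring

lemma aux (l : ℕ) : (AW (l+3)).charpoly =
    (∏ i ∈ Finset.range (l+2), (X + C ((i : ℚ) + 1))) - C (((l+3).factorial : ℚ)) := by
  set N : Matrix (Fin (l+2)) (Fin (l+2)) ℚ[X] := charmatrix (AW (l+3)) with hNdef
  have hN : ∀ i j : Fin (l+2), N i j =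
      (if i = j then X else 0) - C ((if i = j then -((i : ℚ) + 1) else 0) +
      (if (i : ℕ) = (j : ℕ) + 1 then (i : ℚ) + 1 else 0) +
      (if (i : ℕ) = 0 ∧ (j : ℕ) = l+1 then ((l+3 : ℕ) : ℚ) else 0)) := by
    intro i j
    rw [hNdef, charmatrix_apply]
    by_cases h : i = j <;> simp [h, Matrix.diagonal, AW]
  have hch : (AW (l+3)).charpoly = N.det := rfl
  rw [hch, Matrix.det_succ_row_zero]
  have h0last : (0 : Fin (l+2)) ≠ Fin.last (l+1) := by
    simp [Fin.ext_iff]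
  rw [Finset.sum_eq_add_of_mem (0 : Fin (l+2)) (Fin.last (l+1)) (Finset.mem_univ _)
    (Finset.mem_univ _) h0last ?_]
  · have hA : N 0 0 = X + C 1 := by
      have e2 : ¬(((0 : Fin (l+2)) : ℕ) = ((0 : Fin (l+2)) : ℕ) + 1) := by simp
      have e3 : ¬(((0 : Fin (l+2)) : ℕ) = 0 ∧ ((0 : Fin (l+2)) : ℕ) = l+1) := by simp
      rw [hN, if_pos rfl, if_pos rfl, if_neg e2, if_neg e3]
      norm_num
    have hB : N 0 (Fin.last (l+1)) = -C ((l+3 : ℕ) : ℚ) := by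
      have e2 : ¬(((0 : Fin (l+2)) : ℕ) = ((Fin.last (l+1) : Fin (l+2)) : ℕ) + 1) := by simp
      have e3 : (((0 : Fin (l+2)) : ℕ) = 0 ∧ ((Fin.last (l+1) : Fin (l+2)) : ℕ) = l+1) := by simp
      rw [hN, if_neg h0last, if_neg h0last, if_neg e2, if_pos e3]
      norm_num
    -- minor 1 : lower triangular
    have hd1 : (N.submatrix Fin.succ ((0 : Fin (l+2)).succAbove)).det
        = ∏ i : Fin (l+1), (X + C ((i : ℚ) + 2)) := by
      rw [Matrix.det_of_lowerTriangular]
      · apply Finset.prod_congr rfl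
        intro i _
        simp only [Matrix.submatrix_apply, Fin.succAbove_zero]
        have e2 : ¬((i.succ : ℕ) = (i.succ : ℕ) + 1) := by omega
        have e3 : ¬((i.succ : ℕ) = 0 ∧ (i.succ : ℕ) = l+1) := by
          simp [Fin.val_succ]
        rw [hN, if_pos rfl, if_pos rfl, if_neg e2, if_neg e3]
        rw [Fin.val_succ]
        push_cast
        ring_nf
        rw [show (-2 - ((i:ℕ):ℚ)) = -(2 + ((i:ℕ):ℚ)) from by ring, map_neg, sub_neg_eq_add]
      · intro i j hij
        simp only [OrderDual.toDual_lt_toDual] at hij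
        have hij' : (i : ℕ) < (j : ℕ) := hij
        simp only [Matrix.submatrix_apply, Fin.succAbove_zero]
        have e1 : i.succ ≠ j.succ := by simp [Fin.ext_iff]; omega
        have e2 : ¬((i.succ : ℕ) = (j.succ : ℕ) + 1) := by
          simp [Fin.val_succ]; omega
        have e3 : ¬((i.succ : ℕ) = 0 ∧ (j.succ : ℕ) = l+1) := by
          simp [Fin.val_succ]
        rw [hN, if_neg e1, if_neg e1, if_neg e2, if_neg e3]
        norm_num
    -- minor 2 : upper triangular
    have hd2 : (N.submatrix Fin.succ ((Fin.last (l+1)).succAbove)).det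
        = ∏ i : Fin (l+1), (-C ((i : ℚ) + 2)) := by
      rw [Matrix.det_of_upperTriangular]
      · apply Finset.prod_congr rfl
        intro i _
        simp only [Matrix.submatrix_apply, Fin.succAbove_last]
        have e1 : i.succ ≠ i.castSucc := by simp [Fin.ext_iff]
        have e2 : ((i.succ : ℕ) = (i.castSucc : ℕ) + 1) := by
          simp [Fin.val_succ]
        have e3 : ¬((i.succ : ℕ) = 0 ∧ (i.castSucc : ℕ) = l+1) := by
          simp [Fin.val_succ]
        rw [hN, if_neg e1, if_neg e1, if_pos e2, if_neg e3]
        rw [Fin.val_succ]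
        push_cast
        ring
      · intro i j hij
        have hij' : (j : ℕ) < (i : ℕ) := hij
        simp only [Matrix.submatrix_apply, Fin.succAbove_last]
        have e1 : i.succ ≠ j.castSucc := by simp [Fin.ext_iff]; omega
        have e2 : ¬((i.succ : ℕ) = (j.castSucc : ℕ) + 1) := by
          simp [Fin.val_succ]; omega
        have e3 : ¬((i.succ : ℕ) = 0 ∧ (j.castSucc : ℕ) = l+1) := by
          simp [Fin.val_succ]
        rw [hN, if_neg e1, if_neg e1, if_neg e2, if_neg e3]
        norm_num
    rw [hA, hB, hd1, hd2]
    have hprod2 : ∏ i : Fin (l+1), (-C ((i : ℚ) + 2)) =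
        (-1)^(l+1) * C (((l+2).factorial : ℚ)) := by
      have hneg : ∀ i : Fin (l+1), -C ((i:ℚ)+2) = (-1 : ℚ[X]) * C ((i:ℚ)+2) := fun i => by ring
      rw [Finset.prod_congr rfl (fun i _ => hneg i), Finset.prod_mul_distrib, Finset.prod_const, Finset.card_univ, Fintype.card_fin]
      congr 1
      rw [← map_prod]
      congr 1
      rw [Fin.prod_univ_eq_prod_range (fun i => ((i:ℚ)+2)) (l+1)]
      rw [show ((((l+2).factorial : ℕ)):ℚ) = ((∏ i ∈ Finset.range (l+1), (i+2) : ℕ) : ℚ) from by rw [fact_aux (l+1)]]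
      push_cast
      rfl
    have hprod1 : ∏ i : Fin (l+1), (X + C ((i : ℚ) + 2)) =
        ∏ i ∈ Finset.range (l+1), (X + C ((i:ℚ) + 2)) :=
      Fin.prod_univ_eq_prod_range (fun k => X + C ((k:ℚ)+2)) (l+1)
    rw [hprod1, hprod2]
    have key : (∏ i ∈ Finset.range (l+2), (X + C ((i : ℚ) + 1))) =
        (∏ i ∈ Finset.range (l+1), (X + C ((i:ℚ) + 2))) * (X + C 1) := by
      rw [Finset.prod_range_succ']
      congr 1
      · exact Finset.prod_congr rfl (fun i _ => by push_cast; ring)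
      · norm_num
    rw [key, Fin.val_last, Fin.val_zero]
    have hfac : ((l+3).factorial : ℚ) = ((l+3 : ℕ) : ℚ) * ((l+2).factorial : ℚ) := by
      rw [show l+3 = (l+2)+1 by ring, Nat.factorial_succ]
      push_cast; ring
    rw [hfac, C_mul]
    have hsq : ((-1 : ℚ[X])^(l+1)) * ((-1 : ℚ[X])^(l+1)) = 1 := by
      rw [← pow_add]
      exact Even.neg_one_pow ⟨l+1, by ring⟩
    linear_combination (-(C ((l+3:ℕ):ℚ)) * C (((l+2).factorial : ℚ))) * hsq
  · intro c _ hc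
    obtain ⟨hc0, hclast⟩ := hc
    have e1 : (0 : Fin (l+2)) ≠ c := fun h => hc0 h.symm
    have e2 : ¬(((0 : Fin (l+2)) : ℕ) = (c : ℕ) + 1) := by simp
    have e3 : ¬(((0 : Fin (l+2)) : ℕ) = 0 ∧ (c : ℕ) = l + 1) := by
      simp only [Fin.val_zero, true_and]
      intro h; exact hclast (Fin.ext (by simp [h]))
    rw [hN, if_neg e1, if_neg e1, if_neg e2, if_neg e3]
    norm_num

/-- The characteristic polynomial of `A_W` is `φ_m(λ) = ∏_{i=1}^{m-1}(λ + i) - m!`. -/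
theorem charpoly_AW (m : ℕ) (hm : 2 ≤ m) :
    (AW m).charpoly =
      (∏ i ∈ Finset.range (m - 1), (X + C ((i : ℚ) + 1))) - C ((m.factorial : ℚ)) := by
  obtain ⟨k, rfl⟩ : ∃ k, m = k + 2 := ⟨m - 2, by omega⟩
  cases k with
  | zero =>
    have h1 : (AW 2).charpoly = Matrix.charmatrix (AW 2) 0 0 := by
      rw [Matrix.charpoly, Matrix.det_fin_one]
    rw [h1, Matrix.charmatrix_apply_eq]
    simp [AW]
    ring
  | succ l => exact aux l
end

section
/- For m ≥ 3, the characteristic polynomial of the m×m matrix A_L with entries A_L[i,i] = -i for 1 ≤ i ≤ m, A_L[i,i-1] = i for 2 ≤ i ≤ m, A_L[1,m] = m-1, A_L[2,m] = 2, and all other entries 0, equals (λ + m)·φ_m(λ), where φ_m(λ) = ∏_{i=1}^{m-1}(λ+i) - m!. -/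
open Polynomial

/-- The replacement matrix `A_L` for the leaf-urn of an `m`-ary search tree
(`m ≥ 3`): `A_L[i,i] = -i` (1-indexed), `A_L[i,i-1] = i`, `A_L[1,m] = m-1`,
`A_L[2,m] = 2`, all other entries 0. -/
def AL (m : ℕ) : Matrix (Fin m) (Fin m) ℚ :=
  Matrix.of fun i j =>
    if i = j then -((i : ℚ) + 1)
    else if (i : ℕ) = (j : ℕ) + 1 then (i : ℚ) + 1
    else if (i : ℕ) = 0 ∧ (j : ℕ) = m - 1 then (m : ℚ) - 1
    else if (i : ℕ) = 1 ∧ (j : ℕ) = m - 1 then 2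
    else 0

lemma AL_zero (m : ℕ) (i j : Fin m) (h1 : (i : ℕ) ≠ (j : ℕ))
    (h2 : (i : ℕ) ≠ (j : ℕ) + 1) (h3 : ¬ ((i : ℕ) ≤ 1 ∧ (j : ℕ) = m - 1)) :
    AL m i j = 0 := by
  simp only [AL, Matrix.of_apply]
  rw [if_neg (by simp [Fin.ext_iff]; omega), if_neg h2, if_neg (by omega), if_neg (by omega)]

lemma AL_sub (m : ℕ) (i j : Fin m) (h2 : (i : ℕ) = (j : ℕ) + 1)
    (h3 : ¬ ((i : ℕ) ≤ 1 ∧ (j : ℕ) = m - 1)) :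
    AL m i j = (i : ℚ) + 1 := by
  simp only [AL, Matrix.of_apply]
  rw [if_neg (by simp [Fin.ext_iff]; omega), if_pos h2]

lemma prod_shift2 (n : ℕ) : (∏ k ∈ Finset.range n, ((k : ℚ) + 2)) = (n + 1).factorial := by
  induction n with
  | zero => simp
  | succ n ih =>
      rw [Finset.prod_range_succ, ih]
      push_cast [Nat.factorial_succ]
      ring

lemma prod_shift3 (n : ℕ) : 2 * (∏ k ∈ Finset.range n, ((k : ℚ) + 3)) = (n + 2).factorial := by
  induction n with
  | zero => simp [Nat.factorial]
  | succ n ih =>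
      rw [Finset.prod_range_succ, ← mul_assoc, ih]
      push_cast [Nat.factorial_succ]
      ring

/-- The characteristic polynomial of `A_L` is `(λ + m)·φ_m(λ)` with
`φ_m(λ) = ∏_{i=1}^{m-1}(λ+i) - m!`. -/
theorem charpoly_AL (m : ℕ) (hm : 3 ≤ m) :
    (AL m).charpoly =
      (X + C ((m : ℚ))) *
        ((∏ i ∈ Finset.range (m - 1), (X + C ((i : ℚ) + 1))) - C ((m.factorial : ℚ))) := by
  obtain ⟨n, rfl⟩ : ∃ n, m = n + 3 := ⟨m - 3, by omega⟩
  set M : Matrix (Fin (n + 3)) (Fin (n + 3)) ℚ[X] := Matrix.charmatrix (AL (n + 3)) with hM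
  have hdet : (AL (n + 3)).charpoly = M.det := rfl
  rw [hdet]
  rw [show M.det = ∑ i : Fin (n + 2).succ,
      (-1) ^ (i + (Fin.last (n + 2)) : ℕ) * M i (Fin.last (n + 2)) *
        Matrix.det (M.submatrix i.succAbove (Fin.last (n + 2)).succAbove) from
    Matrix.det_succ_column M (Fin.last (n + 2))]
  have hL2 : ((Fin.last (n + 2) : Fin (n + 3)) : ℕ) = n + 2 := rfl
  have hval0 : ((0 : Fin (n + 3)) : ℕ) = 0 := rfl
  have hval1 : ((1 : Fin (n + 3)) : ℕ) = 1 := rfl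
  -- restrict the sum to the three nonzero entries of the last column
  have hsub : (∑ i : Fin (n + 2).succ,
      (-1) ^ (i + (Fin.last (n + 2)) : ℕ) * M i (Fin.last (n + 2)) *
        Matrix.det (M.submatrix i.succAbove (Fin.last (n + 2)).succAbove)) =
      ∑ i ∈ ({0, 1, Fin.last (n + 2)} : Finset (Fin (n + 3))),
      (-1) ^ (i + (Fin.last (n + 2)) : ℕ) * M i (Fin.last (n + 2)) *
        Matrix.det (M.submatrix i.succAbove (Fin.last (n + 2)).succAbove) := by
    refine (Finset.sum_subset (Finset.subset_univ _) ?_).symm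
    intro i _ hi
    simp only [Finset.mem_insert, Finset.mem_singleton, not_or] at hi
    obtain ⟨hi0, hi1, hiL⟩ := hi
    have hv0 : (i : ℕ) ≠ 0 := fun h => hi0 (Fin.ext (h.trans hval0.symm))
    have hv1 : (i : ℕ) ≠ 1 := fun h => hi1 (by simpa [Fin.ext_iff] using h)
    have hvL : (i : ℕ) ≠ n + 2 := fun h => hiL (by simpa [Fin.ext_iff, hL2] using h)
    have hz : M i (Fin.last (n + 2)) = 0 := by
      have hAz : AL (n + 3) i (Fin.last (n + 2)) = 0 := by
        apply AL_zero
        · rw [hL2]; exact hvL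
        · rw [hL2]; omega
        · rw [hL2]; omega
      rw [hM, Matrix.charmatrix_apply_ne _ _ _ hiL, hAz, map_zero, neg_zero]
    rw [hz, mul_zero, zero_mul]
  rw [hsub]
  have h0mem : (0 : Fin (n + 3)) ∉ ({1, Fin.last (n + 2)} : Finset (Fin (n + 3))) := by
    simp only [Finset.mem_insert, Finset.mem_singleton, Fin.ext_iff, hval0, hval1, hL2, not_or]
    omega
  have h1mem : (1 : Fin (n + 3)) ∉ ({Fin.last (n + 2)} : Finset (Fin (n + 3))) := by
    simp only [Finset.mem_singleton, Fin.ext_iff, hval1, hL2]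
    omega
  rw [Finset.sum_insert h0mem, Finset.sum_insert h1mem, Finset.sum_singleton]
  -- the three entries of the last column
  have hM0L : M 0 (Fin.last (n + 2)) = -C ((n : ℚ) + 2) := by
    have hne : (0 : Fin (n + 3)) ≠ Fin.last (n + 2) := by
      simp only [ne_eq, Fin.ext_iff, hval0, hL2]; omega
    rw [hM, Matrix.charmatrix_apply_ne _ _ _ hne]
    have hA : AL (n + 3) 0 (Fin.last (n + 2)) = (n : ℚ) + 2 := by
      simp only [AL, Matrix.of_apply]
      rw [if_neg hne, if_neg (by rw [hval0, hL2]; omega),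
        if_pos (by rw [hval0, hL2]; omega)]
      push_cast
      ring
    rw [hA]
  have hM1L : M 1 (Fin.last (n + 2)) = -C (2 : ℚ) := by
    have hne : (1 : Fin (n + 3)) ≠ Fin.last (n + 2) := by
      simp only [ne_eq, Fin.ext_iff, hval1, hL2]; omega
    rw [hM, Matrix.charmatrix_apply_ne _ _ _ hne]
    have hA : AL (n + 3) 1 (Fin.last (n + 2)) = 2 := by
      simp only [AL, Matrix.of_apply]
      rw [if_neg hne, if_neg (by rw [hval1, hL2]; omega),
        if_neg (by rw [hval1, hL2]; omega), if_pos (by rw [hval1, hL2]; omega)]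
    rw [hA]
  have hMLL : M (Fin.last (n + 2)) (Fin.last (n + 2)) = X + C ((n : ℚ) + 3) := by
    rw [hM, Matrix.charmatrix_apply_eq]
    have hA : AL (n + 3) (Fin.last (n + 2)) (Fin.last (n + 2)) = -((n : ℚ) + 3) := by
      simp only [AL, Matrix.of_apply, if_pos rfl, hL2]
      push_cast
      ring
    rw [hA, map_neg, sub_neg_eq_add]
  -- the minor for the last row: lower triangular
  have hminorL : Matrix.det (M.submatrix (Fin.last (n + 2)).succAbove
        (Fin.last (n + 2)).succAbove) =
      ∏ i ∈ Finset.range (n + 2), (X + C ((i : ℚ) + 1)) := by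
    rw [Fin.succAbove_last]
    have htri : (M.submatrix Fin.castSucc Fin.castSucc).BlockTriangular OrderDual.toDual := by
      intro i j hij
      have hv : (i : ℕ) < (j : ℕ) := hij
      simp only [Matrix.submatrix_apply]
      have hne : (Fin.castSucc i) ≠ Fin.castSucc j := by
        simp only [ne_eq, Fin.ext_iff, Fin.coe_castSucc]; omega
      have hjlt : (j : ℕ) < n + 2 := j.isLt
      rw [hM, Matrix.charmatrix_apply_ne _ _ _ hne, AL_zero, map_zero, neg_zero]
      · simp only [Fin.coe_castSucc]; omega
      · simp only [Fin.coe_castSucc]; omega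
      · simp only [Fin.coe_castSucc]; omega
    rw [Matrix.det_of_lowerTriangular _ htri]
    have hdiag : ∀ i : Fin (n + 2),
        (M.submatrix Fin.castSucc Fin.castSucc) i i = X + C ((i : ℚ) + 1) := by
      intro i
      simp only [Matrix.submatrix_apply]
      rw [hM, Matrix.charmatrix_apply_eq]
      have hA : AL (n + 3) i.castSucc i.castSucc = -((i : ℚ) + 1) := by
        simp [AL]
      rw [hA, map_neg, sub_neg_eq_add]
    rw [Finset.prod_congr rfl (fun i _ => hdiag i)]
    exact Fin.prod_univ_eq_prod_range (fun k => X + C ((k : ℚ) + 1)) (n + 2)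
  -- the minor for row 0: upper triangular
  have hminor0 : Matrix.det (M.submatrix (0 : Fin (n + 3)).succAbove
        (Fin.last (n + 2)).succAbove) =
      (-1) ^ (n + 2) * C (((n + 3).factorial : ℚ)) := by
    rw [Fin.succAbove_last, Fin.succAbove_zero]
    have htri : (M.submatrix Fin.succ Fin.castSucc).BlockTriangular id := by
      intro i j hij
      have hv : (j : ℕ) < (i : ℕ) := hij
      simp only [Matrix.submatrix_apply]
      have hne : (Fin.succ i) ≠ Fin.castSucc j := by
        simp only [ne_eq, Fin.ext_iff, Fin.val_succ, Fin.coe_castSucc]; omega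
      have hjlt : (j : ℕ) < n + 2 := j.isLt
      have hilt : (i : ℕ) < n + 2 := i.isLt
      rw [hM, Matrix.charmatrix_apply_ne _ _ _ hne, AL_zero, map_zero, neg_zero]
      · simp only [Fin.val_succ, Fin.coe_castSucc]; omega
      · simp only [Fin.val_succ, Fin.coe_castSucc]; omega
      · simp only [Fin.val_succ, Fin.coe_castSucc]; omega
    rw [Matrix.det_of_upperTriangular htri]
    have hdiag : ∀ i : Fin (n + 2),
        (M.submatrix Fin.succ Fin.castSucc) i i = -C ((i : ℚ) + 2) := by
      intro i
      simp only [Matrix.submatrix_apply]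
      have hne : (Fin.succ i) ≠ Fin.castSucc i := by
        simp only [ne_eq, Fin.ext_iff, Fin.val_succ, Fin.coe_castSucc]; omega
      rw [hM, Matrix.charmatrix_apply_ne _ _ _ hne]
      have hA : AL (n + 3) i.succ i.castSucc = (i : ℚ) + 2 := by
        have hilt : (i : ℕ) < n + 2 := i.isLt
        rw [AL_sub]
        · simp only [Fin.val_succ]; push_cast; ring
        · simp only [Fin.val_succ, Fin.coe_castSucc]
        · simp only [Fin.val_succ, Fin.coe_castSucc]; omega
      rw [hA]
    rw [Finset.prod_congr rfl (fun i _ => hdiag i)]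
    rw [Finset.prod_congr rfl (fun (i : Fin (n + 2)) _ => (neg_one_mul (C ((i : ℚ) + 2))).symm),
      Finset.prod_mul_distrib, Finset.prod_const, Finset.card_univ, Fintype.card_fin,
      ← map_prod, Fin.prod_univ_eq_prod_range (fun k => ((k : ℚ) + 2)) (n + 2), prod_shift2]
  -- the minor for row 1: upper triangular
  have hminor1 : Matrix.det (M.submatrix (1 : Fin (n + 3)).succAbove
        (Fin.last (n + 2)).succAbove) =
      (X + C 1) * ((-1) ^ (n + 1) * C (∏ k ∈ Finset.range (n + 1), ((k : ℚ) + 3))) := by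
    rw [Fin.succAbove_last]
    have htri : (M.submatrix (1 : Fin (n + 3)).succAbove Fin.castSucc).BlockTriangular id := by
      intro i j hij
      have hv : (j : ℕ) < (i : ℕ) := hij
      simp only [Matrix.submatrix_apply]
      clear hv
      induction i using Fin.cases with
      | zero => exact (Nat.not_lt_zero _ hij).elim
      | succ k =>
        rw [Fin.one_succAbove_succ]
        have hkv : (j : ℕ) < (k : ℕ) + 1 := hij
        have hklt : (k : ℕ) < n + 1 := k.isLt
        have hne : (k.succ.succ : Fin (n + 3)) ≠ Fin.castSucc j := by
          simp only [ne_eq, Fin.ext_iff, Fin.val_succ, Fin.coe_castSucc]; omega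
        rw [hM, Matrix.charmatrix_apply_ne _ _ _ hne, AL_zero, map_zero, neg_zero]
        · simp only [Fin.val_succ, Fin.coe_castSucc]; omega
        · simp only [Fin.val_succ, Fin.coe_castSucc]; omega
        · simp only [Fin.val_succ, Fin.coe_castSucc]
          have : (j : ℕ) < n + 2 := j.isLt
          omega
    rw [Matrix.det_of_upperTriangular htri]
    rw [Fin.prod_univ_succ]
    have hd0 : (M.submatrix (1 : Fin (n + 3)).succAbove Fin.castSucc) 0 0 = X + C 1 := by
      simp only [Matrix.submatrix_apply, Fin.one_succAbove_zero, Fin.castSucc_zero]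
      rw [hM, Matrix.charmatrix_apply_eq]
      have hA : AL (n + 3) 0 0 = -1 := by
        simp only [AL, Matrix.of_apply, if_pos rfl, hval0]
        norm_num
      rw [hA]
      norm_num
    have hdsucc : ∀ k : Fin (n + 1),
        (M.submatrix (1 : Fin (n + 3)).succAbove Fin.castSucc) k.succ k.succ =
          -C ((k : ℚ) + 3) := by
      intro k
      simp only [Matrix.submatrix_apply]
      rw [Fin.one_succAbove_succ]
      have hklt : (k : ℕ) < n + 1 := k.isLt
      have hne : (k.succ.succ : Fin (n + 3)) ≠ Fin.castSucc k.succ := by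
        simp only [ne_eq, Fin.ext_iff, Fin.val_succ, Fin.coe_castSucc]; omega
      rw [hM, Matrix.charmatrix_apply_ne _ _ _ hne]
      have hA : AL (n + 3) k.succ.succ (Fin.castSucc k.succ) = (k : ℚ) + 3 := by
        rw [AL_sub]
        · simp only [Fin.val_succ]; push_cast; ring
        · simp only [Fin.val_succ, Fin.coe_castSucc]
        · simp only [Fin.val_succ, Fin.coe_castSucc]; omega
      rw [hA]
    rw [hd0, Finset.prod_congr rfl (fun k _ => hdsucc k)]
    rw [Finset.prod_congr rfl (fun (k : Fin (n + 1)) _ => (neg_one_mul (C ((k : ℚ) + 3))).symm),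
      Finset.prod_mul_distrib, Finset.prod_const, Finset.card_univ, Fintype.card_fin,
      ← map_prod, Fin.prod_univ_eq_prod_range (fun k => ((k : ℚ) + 3)) (n + 1)]
  -- put everything together
  rw [hM0L, hM1L, hMLL, hminorL, hminor0, hminor1]
  rw [show ((0 : Fin (n + 3)) : ℕ) + ((Fin.last (n + 2) : Fin (n + 3)) : ℕ) = n + 2 by
    rw [hval0, hL2]; omega]
  rw [show ((1 : Fin (n + 3)) : ℕ) + ((Fin.last (n + 2) : Fin (n + 3)) : ℕ) = n + 3 by
    rw [hval1, hL2]; omega]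
  rw [show ((Fin.last (n + 2) : Fin (n + 3)) : ℕ) + ((Fin.last (n + 2) : Fin (n + 3)) : ℕ) =
      (n + 2) + (n + 2) by rw [hL2]]
  have e0 : ((-1 : ℚ[X])) ^ ((n + 2) + (n + 2)) = 1 := Even.neg_one_pow ⟨n + 2, rfl⟩
  rw [e0, show n + 3 - 1 = n + 2 from rfl]
  have e1 : ((-1 : ℚ[X]) ^ (n + 2)) * ((-1 : ℚ[X]) ^ (n + 2)) = 1 := by
    rw [← pow_add]; exact Even.neg_one_pow ⟨n + 2, by ring⟩
  have e2 : ((-1 : ℚ[X]) ^ (n + 3)) * ((-1 : ℚ[X]) ^ (n + 1)) = 1 := by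
    rw [← pow_add]; exact Even.neg_one_pow ⟨n + 2, by ring⟩
  have e3 : C (2 : ℚ) * C (∏ k ∈ Finset.range (n + 1), ((k : ℚ) + 3)) =
      C (((n + 3).factorial : ℚ)) := by
    rw [← map_mul, prod_shift3 (n + 1)]
  have e4 : C ((n : ℚ) + 3) = C ((n : ℚ) + 2) + C (1 : ℚ) := by
    rw [← map_add]; congr 1; ring
  have hcast : ((↑(n + 3) : ℚ)) = (n : ℚ) + 3 := by push_cast; ring
  rw [hcast]
  linear_combination
    (-(C ((n : ℚ) + 2) * C (((n + 3).factorial : ℚ)))) * e1 +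
    (-(C (2 : ℚ) * (X + C 1) * C (∏ k ∈ Finset.range (n + 1), ((k : ℚ) + 3)))) * e2 +
    (-(X + C (1 : ℚ))) * e3 +
    C (((n + 3).factorial : ℚ)) * e4
end
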